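/- arXiv:2103.05417 — 2 statements merged into one kernel-verified Lean document; each statement's English description precedes it below -/
import Mathlib

section
/- Let H be a graph with at least one edge and no isolated vertices, t ≥ 1, and let C be the graph obtained from μ_t(H) by attaching ℓ ≥ 1 pendant vertices x_1,…,x_ℓ to the root w. If S is a minimum-size subset of V(μ_t(H)) \ {w} such that S ∪ {w} is a determining set for μ_t(H), then S ∪ {x_2,…,x_ℓ} is a minimum-size determining set for C. -/
open SimpleGraph

/-- The generalized Mycielskian `μ_t(G)`: vertices are `some (s, i)` for levels
`0 ≤ s ≤ t` (level `0` being the original vertices) plus a root `none`. -/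
def Mycielskian {V : Type*} (G : SimpleGraph V) (t : ℕ) :
    SimpleGraph (Option (Fin (t + 1) × V)) where
  Adj x y :=
    match x, y with
    | none, none => False
    | none, some (s, _) => s.val = t
    | some (s, _), none => s.val = t
    | some (s, i), some (r, j) =>
        G.Adj i j ∧ ((s.val = 0 ∧ r.val = 0) ∨ s.val + 1 = r.val ∨ r.val + 1 = s.val)
  symm := by
    refine ⟨?_⟩
    rintro (_ | ⟨s, i⟩) (_ | ⟨r, j⟩) h
    · exact h
    · exact h
    · exact h
    · exact ⟨h.1.symm, by tauto⟩
  loopless := by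
    refine ⟨?_⟩
    rintro (_ | ⟨s, i⟩) h
    · exact h
    · exact G.loopless.irrefl i h.1

/-- `S` is a determining set for `G`: the only automorphism fixing `S` pointwise
is the identity. -/
def IsDetermining {V : Type*} (G : SimpleGraph V) (S : Set V) : Prop :=
  ∀ φ : G ≃g G, (∀ v ∈ S, φ v = v) → ∀ v, φ v = v

/-- The determining number of `G`. -/
noncomputable def detNum {V : Type*} (G : SimpleGraph V) : ℕ :=
  sInf {n | ∃ S : Finset V, S.card = n ∧ IsDetermining G ↑S}

/-- A coloring is distinguishing if no nontrivial automorphism preserves all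
color classes. -/
def IsDistinguishing {V : Type*} (G : SimpleGraph V) {C : Type*} (c : V → C) : Prop :=
  ∀ φ : G ≃g G, (∀ v, c (φ v) = c v) → ∀ v, φ v = v

/-- The distinguishing number of `G`. -/
noncomputable def distNum {V : Type*} (G : SimpleGraph V) : ℕ :=
  sInf {d | ∃ c : V → Fin d, IsDistinguishing G c}

/-- The cost of 2-distinguishing: the minimum size of a color class over all
2-distinguishing colorings. -/
noncomputable def cost2 {V : Type*} (G : SimpleGraph V) [Fintype V] : ℕ :=
  sInf {n | ∃ c : V → Bool, IsDistinguishing G c ∧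
    n = (Finset.univ.filter fun v => c v = true).card}

/-- The twin equivalence relation: equal open neighborhoods. -/
def twinSetoid {V : Type*} (G : SimpleGraph V) : Setoid V where
  r x y := G.neighborSet x = G.neighborSet y
  iseqv := ⟨fun _ => rfl, Eq.symm, Eq.trans⟩

/-- The twin quotient graph `G̃`. -/
def twinQuotient {V : Type*} (G : SimpleGraph V) :
    SimpleGraph (Quotient (twinSetoid G)) where
  Adj a b := ∃ p q : V, Quotient.mk (twinSetoid G) p = a ∧
    Quotient.mk (twinSetoid G) q = b ∧ G.Adj p q
  symm := by refine ⟨?_⟩; rintro a b ⟨p, q, hp, hq, h⟩; exact ⟨q, p, hq, hp, h.symm⟩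
  loopless := by
    refine ⟨?_⟩
    rintro a ⟨p, q, rfl, hq, h⟩
    have htw : G.neighborSet q = G.neighborSet p := Quotient.exact hq
    have hmem : q ∈ G.neighborSet p := h
    rw [← htw] at hmem
    exact G.loopless.irrefl q hmem

/-- A twin cover: contains at least one of every pair of distinct twins. -/
def IsTwinCover {V : Type*} (G : SimpleGraph V) (T : Set V) : Prop :=
  ∀ x y : V, x ≠ y → G.neighborSet x = G.neighborSet y → x ∈ T ∨ y ∈ T

/-- A minimum twin cover. -/
def IsMinTwinCover {V : Type*} (G : SimpleGraph V) (T : Set V) : Prop :=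
  IsTwinCover G T ∧ ∀ T' : Set V, IsTwinCover G T' → T.ncard ≤ T'.ncard

/-- Attach `ℓ` pendant vertices to the vertex `w` of `G`. -/
def attachPendants {V : Type*} (G : SimpleGraph V) (w : V) (ℓ : ℕ) :
    SimpleGraph (V ⊕ Fin ℓ) where
  Adj x y :=
    match x, y with
    | Sum.inl a, Sum.inl b => G.Adj a b
    | Sum.inl a, Sum.inr _ => a = w
    | Sum.inr _, Sum.inl b => b = w
    | Sum.inr _, Sum.inr _ => False
  symm := by refine ⟨?_⟩; rintro (a | a) (b | b) h <;> simp_all <;> exact h.symm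
  loopless := by refine ⟨?_⟩; rintro (a | a) h <;> simp_all


section PendantAux

variable {V : Type*} [Fintype V] {H : SimpleGraph V} {t ℓ : ℕ}

/-- Every non-pendant vertex of the pendant-attached Mycielskian has two distinct
neighbors. -/
lemma myc_two_nbrs (hedge : ∃ a b : V, H.Adj a b) (hnoiso : ∀ v : V, ∃ u : V, H.Adj v u)
    (ht : 1 ≤ t) (w : Option (Fin (t + 1) × V)) :
    ∃ y z : (Option (Fin (t + 1) × V)) ⊕ Fin ℓ, y ≠ z ∧
      (attachPendants (Mycielskian H t) none ℓ).Adj (Sum.inl w) y ∧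
      (attachPendants (Mycielskian H t) none ℓ).Adj (Sum.inl w) z := by
  match w with
  | none =>
    obtain ⟨a, b, hab⟩ := hedge
    refine ⟨Sum.inl (some (⟨t, by omega⟩, a)), Sum.inl (some (⟨t, by omega⟩, b)),
      ?_, rfl, rfl⟩
    simpa using hab.ne
  | some (s, i) =>
    obtain ⟨u, hu⟩ := hnoiso i
    by_cases hst : s.val = t
    · refine ⟨Sum.inl (some (⟨t - 1, by omega⟩, u)), Sum.inl none, by simp, ?_, hst⟩
      exact ⟨hu, Or.inr (Or.inr (by simp; omega))⟩
    · have hlt : s.val < t := lt_of_le_of_ne (by omega) hst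
      by_cases h0 : s.val = 0
      · refine ⟨Sum.inl (some (⟨0, by omega⟩, u)), Sum.inl (some (⟨s.val + 1, by omega⟩, u)),
          ?_, ⟨hu, Or.inl ⟨h0, rfl⟩⟩, ⟨hu, Or.inr (Or.inl rfl)⟩⟩
        intro hc
        have := congrArg (fun x : (Option (Fin (t + 1) × V)) ⊕ Fin ℓ =>
          match x with | Sum.inl (some (a, _)) => a.val | _ => 0) hc
        simp only [Fin.val_mk] at this
        omega
      · refine ⟨Sum.inl (some (⟨s.val - 1, by omega⟩, u)),
          Sum.inl (some (⟨s.val + 1, by omega⟩, u)),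
          ?_, ⟨hu, Or.inr (Or.inr (by simp; omega))⟩, ⟨hu, Or.inr (Or.inl rfl)⟩⟩
        intro hc
        simp [Fin.ext_iff] at hc

/-- Pendant vertices have a unique neighbor, the root. -/
lemma pend_nbr {G : SimpleGraph V} {w : V} (k : Fin ℓ) (y : V ⊕ Fin ℓ)
    (h : (attachPendants G w ℓ).Adj (Sum.inr k) y) : y = Sum.inl w := by
  cases y with
  | inl b => exact congrArg Sum.inl h
  | inr k' => exact absurd h (fun hf => hf)

/-- Automorphisms of the pendant-attached Mycielskian map the Mycielskian part
into itself. -/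
lemma auto_inl (hedge : ∃ a b : V, H.Adj a b) (hnoiso : ∀ v : V, ∃ u : V, H.Adj v u)
    (ht : 1 ≤ t)
    (φ : (attachPendants (Mycielskian H t) none ℓ) ≃g (attachPendants (Mycielskian H t) none ℓ))
    (w : Option (Fin (t + 1) × V)) :
    ∃ v, φ (Sum.inl w) = Sum.inl v := by
  rcases hφ : φ (Sum.inl w) with v | k
  · exact ⟨v, rfl⟩
  · exfalso
    obtain ⟨y, z, hyz, hy, hz⟩ := myc_two_nbrs (ℓ := ℓ) hedge hnoiso ht w
    have h1 : (attachPendants (Mycielskian H t) none ℓ).Adj (φ (Sum.inl w)) (φ y) :=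
      φ.map_rel_iff.mpr hy
    have h2 : (attachPendants (Mycielskian H t) none ℓ).Adj (φ (Sum.inl w)) (φ z) :=
      φ.map_rel_iff.mpr hz
    rw [hφ] at h1 h2
    have e1 := pend_nbr k (φ y) h1
    have e2 := pend_nbr k (φ z) h2
    exact hyz (φ.injective (e1.trans e2.symm))

/-- Automorphisms map pendants to pendants. -/
lemma auto_inr (hedge : ∃ a b : V, H.Adj a b) (hnoiso : ∀ v : V, ∃ u : V, H.Adj v u)
    (ht : 1 ≤ t)
    (φ : (attachPendants (Mycielskian H t) none ℓ) ≃g (attachPendants (Mycielskian H t) none ℓ))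
    (k : Fin ℓ) : ∃ k', φ (Sum.inr k) = Sum.inr k' := by
  rcases hφ : φ (Sum.inr k) with v | k'
  · obtain ⟨v', hv'⟩ := auto_inl hedge hnoiso ht φ.symm v
    have h1 : φ.symm (Sum.inl v) = Sum.inr k := by
      rw [← hφ, φ.symm_apply_apply]
    rw [hv'] at h1
    exact absurd h1 (by simp)
  · exact ⟨k', rfl⟩

/-- Restriction of an automorphism of the pendant-attached graph to the
Mycielskian part. -/
lemma auto_restrict (hedge : ∃ a b : V, H.Adj a b) (hnoiso : ∀ v : V, ∃ u : V, H.Adj v u)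
    (ht : 1 ≤ t) (hℓ : 1 ≤ ℓ)
    (φ : (attachPendants (Mycielskian H t) none ℓ) ≃g (attachPendants (Mycielskian H t) none ℓ)) :
    ∃ ψ : (Mycielskian H t) ≃g (Mycielskian H t),
      (∀ w, φ (Sum.inl w) = Sum.inl (ψ w)) ∧ ψ none = none := by
  choose f hf using auto_inl hedge hnoiso ht φ
  choose g hg using auto_inl hedge hnoiso ht φ.symm
  have hfg : ∀ w, g (f w) = w := by
    intro w
    have h1 := hg (f w)
    rw [← hf w, φ.symm_apply_apply] at h1
    exact (Sum.inl_injective h1).symm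
  have hgf : ∀ w, f (g w) = w := by
    intro w
    have h1 := hf (g w)
    rw [← hg w, φ.apply_symm_apply] at h1
    exact (Sum.inl_injective h1).symm
  have hmap : ∀ a b, (Mycielskian H t).Adj (f a) (f b) ↔ (Mycielskian H t).Adj a b := by
    intro a b
    have h1 := φ.map_rel_iff (a := Sum.inl a) (b := Sum.inl b)
    rw [hf a, hf b] at h1
    exact h1
  refine ⟨⟨⟨f, g, hfg, hgf⟩, hmap _ _⟩, hf, ?_⟩
  obtain ⟨k', hk'⟩ := auto_inr hedge hnoiso ht φ (⟨0, hℓ⟩ : Fin ℓ)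
  have hadj : (attachPendants (Mycielskian H t) none ℓ).Adj
      (Sum.inr (⟨0, hℓ⟩ : Fin ℓ)) (Sum.inl none) := rfl
  have h2 := φ.map_rel_iff.mpr hadj
  rw [hk', hf none] at h2
  exact h2

/-- Extension of an automorphism of the Mycielskian fixing the root to the
pendant-attached graph. -/
def extendIso (ψ : (Mycielskian H t) ≃g (Mycielskian H t)) (hψ : ψ none = none) :
    (attachPendants (Mycielskian H t) none ℓ) ≃g (attachPendants (Mycielskian H t) none ℓ) where
  toEquiv := Equiv.sumCongr ψ.toEquiv (Equiv.refl _)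
  map_rel_iff' := by
    intro a b
    rcases a with a | k <;> rcases b with b | k'
    · exact ψ.map_rel_iff
    · show ψ a = none ↔ a = none
      constructor
      · intro h; exact ψ.injective (h.trans hψ.symm)
      · rintro rfl; exact hψ
    · show ψ b = none ↔ b = none
      constructor
      · intro h; exact ψ.injective (h.trans hψ.symm)
      · rintro rfl; exact hψ
    · exact Iff.rfl

/-- The automorphism swapping two pendants. -/
def swapIso (k₁ k₂ : Fin ℓ) :
    (attachPendants (Mycielskian H t) none ℓ) ≃g (attachPendants (Mycielskian H t) none ℓ) where
  toEquiv := Equiv.sumCongr (Equiv.refl _) (Equiv.swap k₁ k₂)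
  map_rel_iff' := by
    intro a b
    rcases a with a | k <;> rcases b with b | k' <;> exact Iff.rfl

end PendantAux

/-- if `S` is a minimum-size subset of `V(μ_t(H)) \ {w}` with
`S ∪ {w}` determining for `μ_t(H)`, then `S ∪ {x_2,…,x_ℓ}` is a minimum-size
determining set for `C`, the graph obtained from `μ_t(H)` by attaching `ℓ`
pendant vertices to the root. -/
theorem pendant_determining {V : Type*} [Fintype V] (H : SimpleGraph V)
    (hedge : ∃ a b : V, H.Adj a b) (hnoiso : ∀ v : V, ∃ u : V, H.Adj v u)
    (t : ℕ) (ht : 1 ≤ t) (ℓ : ℕ) (hℓ : 1 ≤ ℓ)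
    (S : Set (Option (Fin (t + 1) × V))) (hSw : none ∉ S)
    (hSdet : IsDetermining (Mycielskian H t) (S ∪ {none}))
    (hSmin : ∀ S' : Set (Option (Fin (t + 1) × V)), none ∉ S' →
      IsDetermining (Mycielskian H t) (S' ∪ {none}) → S.ncard ≤ S'.ncard) :
    IsDetermining (attachPendants (Mycielskian H t) none ℓ)
      (Sum.inl '' S ∪ Sum.inr '' {k : Fin ℓ | k ≠ ⟨0, by omega⟩}) ∧
    (∀ B : Set ((Option (Fin (t + 1) × V)) ⊕ Fin ℓ),
      IsDetermining (attachPendants (Mycielskian H t) none ℓ) B →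
      (Sum.inl '' S ∪ Sum.inr '' {k : Fin ℓ | k ≠ ⟨0, by omega⟩}).ncard ≤
        B.ncard) := by
  classical
  constructor
  · -- S ∪ {x₂,…} is determining for C
    intro φ hfix
    obtain ⟨ψ, hψ, hψn⟩ := auto_restrict hedge hnoiso ht hℓ φ
    have hψid : ∀ v, ψ v = v := by
      refine hSdet ψ ?_
      intro v hv
      rcases hv with hv | hv
      · have h1 := hfix (Sum.inl v) (Set.mem_union_left _ ⟨v, hv, rfl⟩)
        rw [hψ v] at h1
        exact Sum.inl_injective h1
      · rw [hv]
        exact hψn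
    have hl : ∀ w, φ (Sum.inl w) = Sum.inl w := fun w => by rw [hψ w, hψid w]
    have hr : ∀ k : Fin ℓ, k ≠ ⟨0, by omega⟩ → φ (Sum.inr k) = Sum.inr k := by
      intro k hk
      exact hfix _ (Set.mem_union_right _ ⟨k, hk, rfl⟩)
    rintro (w | k)
    · exact hl w
    · rcases eq_or_ne k (⟨0, by omega⟩ : Fin ℓ) with hk | hk
      · obtain ⟨k', hk'⟩ := auto_inr hedge hnoiso ht φ k
        rcases eq_or_ne k' k with h0 | h0
        · rw [hk', h0]
        · exfalso
          have hk'0 : k' ≠ (⟨0, by omega⟩ : Fin ℓ) := fun h => h0 (h.trans hk.symm)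
          have h2 := φ.injective (hk'.trans (hr k' hk'0).symm)
          exact h0 (Sum.inr_injective h2).symm
      · exact hr k hk
  · -- minimality
    intro B hBdet
    have key : ∀ z : Fin ℓ,
        (Sum.inl '' S ∪ Sum.inr '' {k : Fin ℓ | k ≠ z}).ncard = S.ncard + (ℓ - 1) := by
      intro z
      have hdisj : Disjoint
          (Sum.inl '' S : Set ((Option (Fin (t + 1) × V)) ⊕ Fin ℓ))
          (Sum.inr '' {k : Fin ℓ | k ≠ z}) := by
        rw [Set.disjoint_left]
        rintro x ⟨a, _, rfl⟩ ⟨b, _, hb⟩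
        exact absurd hb (by simp)
      rw [Set.ncard_union_eq hdisj (Set.toFinite _) (Set.toFinite _),
        Set.ncard_image_of_injective _ Sum.inl_injective,
        Set.ncard_image_of_injective _ Sum.inr_injective]
      congr 1
      have h1 : {k : Fin ℓ | k ≠ z} = ({z} : Set (Fin ℓ))ᶜ := by ext k; simp
      have h2 := Set.ncard_add_ncard_compl ({z} : Set (Fin ℓ))
      rw [Set.ncard_singleton] at h2
      have h3 : Nat.card (Fin ℓ) = ℓ := by simp
      rw [h1]
      omega
    rw [key]
    have hBeq : B = Sum.inl '' {v | Sum.inl v ∈ B} ∪ Sum.inr '' {k | Sum.inr k ∈ B} := by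
      ext x
      rcases x with v | k <;> simp
    have hBcard : B.ncard = {v | Sum.inl v ∈ B}.ncard + {k | Sum.inr k ∈ B}.ncard := by
      have hdisj : Disjoint
          (Sum.inl '' {v | Sum.inl v ∈ B} : Set ((Option (Fin (t + 1) × V)) ⊕ Fin ℓ))
          (Sum.inr '' {k | Sum.inr k ∈ B}) := by
        rw [Set.disjoint_left]
        rintro x ⟨a, _, rfl⟩ ⟨b, _, hb⟩
        exact absurd hb (by simp)
      conv_lhs => rw [hBeq]
      rw [Set.ncard_union_eq hdisj (Set.toFinite _) (Set.toFinite _),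
        Set.ncard_image_of_injective _ Sum.inl_injective,
        Set.ncard_image_of_injective _ Sum.inr_injective]
    have hBr1 : ℓ - 1 ≤ {k | Sum.inr k ∈ B}.ncard := by
      have hone : ({k | Sum.inr k ∈ B}ᶜ : Set (Fin ℓ)).ncard ≤ 1 := by
        rw [Set.ncard_le_one (Set.toFinite _)]
        intro a ha b hb
        by_contra hab
        have hfixB : ∀ x ∈ B, (swapIso (H := H) (t := t) a b) x = x := by
          rintro (v | k) hx
          · rfl
          · show Sum.inr (Equiv.swap a b k) = Sum.inr k
            have hka : k ≠ a := fun h => ha (by rwa [h] at hx)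
            have hkb : k ≠ b := fun h => hb (by rwa [h] at hx)
            rw [Equiv.swap_apply_of_ne_of_ne hka hkb]
        have h4 := hBdet (swapIso (H := H) (t := t) a b) hfixB (Sum.inr a)
        have hval : (swapIso (H := H) (t := t) a b) (Sum.inr a) = Sum.inr b := by
          show Sum.inr (Equiv.swap a b a) = Sum.inr b
          rw [Equiv.swap_apply_left]
        rw [hval] at h4
        exact hab (Sum.inr_injective h4).symm
      have h2 := Set.ncard_add_ncard_compl ({k | Sum.inr k ∈ B} : Set (Fin ℓ))
      have h3 : Nat.card (Fin ℓ) = ℓ := by simp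
      omega
    have hBl1 : S.ncard ≤ {v | Sum.inl v ∈ B}.ncard := by
      have hTdet : IsDetermining (Mycielskian H t)
          (({v | Sum.inl v ∈ B} \ {none}) ∪ {none}) := by
        intro ψ hfixψ v
        have hψn : ψ none = none := hfixψ none (Set.mem_union_right _ rfl)
        have hfixB : ∀ x ∈ B, (extendIso (ℓ := ℓ) ψ hψn) x = x := by
          rintro (u | k) hx
          · show Sum.inl (ψ u) = Sum.inl u
            rcases eq_or_ne u none with rfl | hu
            · rw [hψn]
            · rw [hfixψ u (Set.mem_union_left _ ⟨hx, hu⟩)]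
          · rfl
        have h5 := hBdet (extendIso (ℓ := ℓ) ψ hψn) hfixB (Sum.inl v)
        exact Sum.inl_injective h5
      have h1 := hSmin _ (fun h => h.2 rfl) hTdet
      have h2 : ({v | Sum.inl v ∈ B} \ {none} :
          Set (Option (Fin (t + 1) × V))).ncard ≤ {v | Sum.inl v ∈ B}.ncard :=
        Set.ncard_le_ncard Set.diff_subset (Set.toFinite _)
      omega
    omega
end

section
/- Let T be a minimum twin cover of a graph G that has at least one isolated vertex, and let u be the isolated vertex of G not in T. Then for t ≥ 1, the set {u_i^s : v_i ∈ T, 0 ≤ s ≤ t} ∪ {u^s : 1 ≤ s ≤ t−1} is a minimum twin cover of μ_t(G), of size (t+1)|T| + t − 1. -/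
open SimpleGraph

section MycAux

variable {V : Type*} {G : SimpleGraph V} {t : ℕ}

lemma myc_adj_ss {s r : Fin (t+1)} {i j : V} :
    (Mycielskian G t).Adj (some (s, i)) (some (r, j)) ↔
      G.Adj i j ∧ ((s.val = 0 ∧ r.val = 0) ∨ s.val + 1 = r.val ∨ r.val + 1 = s.val) :=
  Iff.rfl

lemma myc_adj_ns {s : Fin (t+1)} {i : V} :
    (Mycielskian G t).Adj none (some (s, i)) ↔ s.val = t := Iff.rfl

lemma myc_adj_sn {s : Fin (t+1)} {i : V} :
    (Mycielskian G t).Adj (some (s, i)) none ↔ s.val = t := Iff.rfl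

/-- twins at the same level -/
lemma myc_twin_lift {i j : V} (h : G.neighborSet i = G.neighborSet j) (s : Fin (t+1)) :
    (Mycielskian G t).neighborSet (some (s, i)) = (Mycielskian G t).neighborSet (some (s, j)) := by
  ext w
  cases w with
  | none => simp [SimpleGraph.mem_neighborSet, myc_adj_sn]
  | some p =>
    obtain ⟨r, k⟩ := p
    have hk : G.Adj i k ↔ G.Adj j k := by
      rw [← SimpleGraph.mem_neighborSet, ← SimpleGraph.mem_neighborSet, h]
    simp only [SimpleGraph.mem_neighborSet, myc_adj_ss]
    tauto

/-- isolated vertices have empty neighborhood below level t -/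
lemma myc_iso_empty {i : V} (hi : ∀ x, ¬ G.Adj i x) {s : Fin (t+1)} (hs : s.val < t) :
    (Mycielskian G t).neighborSet (some (s, i)) = ∅ := by
  ext w
  cases w with
  | none =>
    simp only [SimpleGraph.mem_neighborSet, myc_adj_sn, Set.mem_empty_iff_false, iff_false]
    omega
  | some p =>
    obtain ⟨r, k⟩ := p
    simp only [SimpleGraph.mem_neighborSet, myc_adj_ss, Set.mem_empty_iff_false, iff_false]
    exact fun h => hi k h.1

end MycAux

/-- for a minimum twin cover `T` of `G` with at least one
isolated vertex, where `u` is the isolated vertex not in `T`, the set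
`T_t ∪ {u^s : 1 ≤ s ≤ t−1}` is a minimum twin cover of `μ_t(G)` of size
`(t+1)|T| + t − 1`. -/
theorem min_twin_cover_mycielskian {V : Type*} [Fintype V] (G : SimpleGraph V)
    (T : Set V) (hT : IsMinTwinCover G T)
    (u : V) (hu : ∀ x : V, ¬ G.Adj u x) (huT : u ∉ T) (t : ℕ) (ht : 1 ≤ t) :
    IsMinTwinCover (Mycielskian G t)
      ({p : Option (Fin (t + 1) × V) | ∃ i ∈ T, ∃ s : Fin (t + 1), p = some (s, i)} ∪
       {p : Option (Fin (t + 1) × V) | ∃ s : Fin (t + 1),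
          1 ≤ s.val ∧ s.val ≤ t - 1 ∧ p = some (s, u)}) ∧
    ({p : Option (Fin (t + 1) × V) | ∃ i ∈ T, ∃ s : Fin (t + 1), p = some (s, i)} ∪
       {p : Option (Fin (t + 1) × V) | ∃ s : Fin (t + 1),
          1 ≤ s.val ∧ s.val ≤ t - 1 ∧ p = some (s, u)}).ncard =
      (t + 1) * T.ncard + t - 1 := by
  classical
  set S1 : Set (Option (Fin (t + 1) × V)) :=
    {p : Option (Fin (t + 1) × V) | ∃ i ∈ T, ∃ s : Fin (t + 1), p = some (s, i)} with hS1def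
  set S2 : Set (Option (Fin (t + 1) × V)) :=
    {p : Option (Fin (t + 1) × V) | ∃ s : Fin (t + 1),
       1 ≤ s.val ∧ s.val ≤ t - 1 ∧ p = some (s, u)} with hS2def
  have hmemS1 : ∀ (s : Fin (t+1)) (i : V), i ∈ T → some (s, i) ∈ S1 ∪ S2 :=
    fun s i hi => Or.inl ⟨i, hi, s, rfl⟩
  have hmemS2 : ∀ (s : Fin (t+1)), 1 ≤ s.val → s.val ≤ t - 1 → some (s, u) ∈ S1 ∪ S2 :=
    fun s h1 h2 => Or.inr ⟨s, h1, h2, rfl⟩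
  ----------------------------------------------------------------
  -- PART 1 : cover
  ----------------------------------------------------------------
  have hcover : IsTwinCover (Mycielskian G t) (S1 ∪ S2) := by
    rintro (_ | ⟨s, i⟩) (_ | ⟨r, j⟩) hxy hN
    · exact absurd rfl hxy
    · exfalso
      have h1 : some ((⟨t, by omega⟩ : Fin (t+1)), u) ∈
          (Mycielskian G t).neighborSet none := by
        rw [SimpleGraph.mem_neighborSet]
        exact myc_adj_ns.2 rfl
      rw [hN] at h1
      exact hu j ((myc_adj_ss.1 h1).1.symm)
    · exfalso
      have h1 : some ((⟨t, by omega⟩ : Fin (t+1)), u) ∈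
          (Mycielskian G t).neighborSet none := by
        rw [SimpleGraph.mem_neighborSet]
        exact myc_adj_ns.2 rfl
      rw [← hN] at h1
      exact hu i ((myc_adj_ss.1 h1).1.symm)
    · -- main case
      by_cases hiso : ∀ x, ¬ G.Adj i x
      · -- i isolated; show j isolated
        have hjiso : ∀ x, ¬ G.Adj j x := by
          intro k hk
          rcases Nat.lt_or_ge r.val t with hrt | hrt
          · have hw : some ((⟨r.val + 1, by omega⟩ : Fin (t+1)), k) ∈
                (Mycielskian G t).neighborSet (some (r, j)) :=
              myc_adj_ss.2 ⟨hk, Or.inr (Or.inl (by simp only [Fin.val_mk]))⟩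
            rw [← hN] at hw
            exact hiso k (myc_adj_ss.1 hw).1
          · have hrt' : r.val = t := by have := r.isLt; omega
            have hw : some ((⟨r.val - 1, by omega⟩ : Fin (t+1)), k) ∈
                (Mycielskian G t).neighborSet (some (r, j)) :=
              myc_adj_ss.2 ⟨hk, Or.inr (Or.inr (by simp only [Fin.val_mk]; omega))⟩
            rw [← hN] at hw
            exact hiso k (myc_adj_ss.1 hw).1
        by_cases hiu : i = u
        · by_cases hju : j = u
          · have hsr : s ≠ r := by
              intro h
              exact hxy (by rw [h, hiu, hju])
            have hsrv : s.val ≠ r.val := fun h => hsr (Fin.ext h)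
            have hstiff : s.val = t ↔ r.val = t := by
              have h1 : none ∈ (Mycielskian G t).neighborSet (some (s, i)) ↔
                  none ∈ (Mycielskian G t).neighborSet (some (r, j)) := by rw [hN]
              simpa [SimpleGraph.mem_neighborSet, myc_adj_sn] using h1
            have hslt : s.val < t ∧ r.val < t := by
              have := s.isLt; have := r.isLt; omega
            rcases Nat.lt_or_ge s.val 1 with hs1 | hs1
            · have hr1 : 1 ≤ r.val := by omega
              refine Or.inr ?_
              rw [hju]
              exact hmemS2 r hr1 (by omega)
            · refine Or.inl ?_
              rw [hiu]
              exact hmemS2 s hs1 (by omega)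
          · have hnb : G.neighborSet j = G.neighborSet u := by
              ext k
              simp only [SimpleGraph.mem_neighborSet]
              exact iff_of_false (hjiso k) (hu k)
            rcases hT.1 j u hju hnb with h | h
            · exact Or.inr (hmemS1 r j h)
            · exact absurd h huT
        · have hnb : G.neighborSet i = G.neighborSet u := by
            ext k
            simp only [SimpleGraph.mem_neighborSet]
            exact iff_of_false (hiso k) (hu k)
          rcases hT.1 i u hiu hnb with h | h
          · exact Or.inl (hmemS1 s i h)
          · exact absurd h huT
      · -- i not isolated
        push_neg at hiso
        obtain ⟨k, hik⟩ := hiso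
        have hstiff : s.val = t ↔ r.val = t := by
          have h1 : none ∈ (Mycielskian G t).neighborSet (some (s, i)) ↔
              none ∈ (Mycielskian G t).neighborSet (some (r, j)) := by rw [hN]
          simpa [SimpleGraph.mem_neighborSet, myc_adj_sn] using h1
        have hsr : s.val = r.val := by
          rcases Nat.lt_or_ge s.val t with hst | hst
          · have hrt : r.val < t := by have := r.isLt; omega
            have hup : some ((⟨s.val + 1, by omega⟩ : Fin (t+1)), k) ∈
                (Mycielskian G t).neighborSet (some (s, i)) :=
              myc_adj_ss.2 ⟨hik, Or.inr (Or.inl (by simp only [Fin.val_mk]))⟩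
            rw [hN] at hup
            have hc1 := (myc_adj_ss.1 hup).2
            simp only [Fin.val_mk] at hc1
            rcases Nat.lt_or_ge s.val 1 with hs1 | hs1
            · have h0 : some ((⟨0, by omega⟩ : Fin (t+1)), k) ∈
                  (Mycielskian G t).neighborSet (some (s, i)) :=
                myc_adj_ss.2 ⟨hik, Or.inl ⟨by omega, by simp only [Fin.val_mk]⟩⟩
              rw [hN] at h0
              have hc2 := (myc_adj_ss.1 h0).2
              simp only [Fin.val_mk] at hc2
              omega
            · have hdn : some ((⟨s.val - 1, by omega⟩ : Fin (t+1)), k) ∈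
                  (Mycielskian G t).neighborSet (some (s, i)) :=
                myc_adj_ss.2 ⟨hik, Or.inr (Or.inr (by simp only [Fin.val_mk]; omega))⟩
              rw [hN] at hdn
              have hc2 := (myc_adj_ss.1 hdn).2
              simp only [Fin.val_mk] at hc2
              omega
          · have hst' : s.val = t := by have := s.isLt; omega
            have := hstiff.1 hst'
            omega
        have hfin : G.neighborSet i = G.neighborSet j := by
          ext k'
          simp only [SimpleGraph.mem_neighborSet]
          rcases Nat.lt_or_ge s.val t with hlt | hge
          · have h := Set.ext_iff.1 hN (some ((⟨s.val + 1, by omega⟩ : Fin (t+1)), k'))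
            simp only [SimpleGraph.mem_neighborSet, myc_adj_ss, Fin.val_mk] at h
            constructor
            · intro ha; exact (h.1 ⟨ha, Or.inr (Or.inl (by simp only [Fin.val_mk]))⟩).1
            · intro ha; exact (h.2 ⟨ha, Or.inr (Or.inl (by omega))⟩).1
          · have hseq : s.val = t := by have := s.isLt; omega
            have h := Set.ext_iff.1 hN (some ((⟨t - 1, by omega⟩ : Fin (t+1)), k'))
            simp only [SimpleGraph.mem_neighborSet, myc_adj_ss, Fin.val_mk] at h
            constructor
            · intro ha; exact (h.1 ⟨ha, Or.inr (Or.inr (by omega))⟩).1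
            · intro ha; exact (h.2 ⟨ha, Or.inr (Or.inr (by omega))⟩).1
        have hij : i ≠ j := by
          intro h
          exact hxy (by rw [Fin.ext hsr, h])
        rcases hT.1 i j hij hfin with h | h
        · exact Or.inl (hmemS1 s i h)
        · exact Or.inr (hmemS1 r j h)
  ----------------------------------------------------------------
  -- PART 2 : cardinality of the union
  ----------------------------------------------------------------
  have hdisj : Disjoint S1 S2 := by
    rw [Set.disjoint_left]
    rintro p ⟨i, hiT, s, rfl⟩ ⟨s', _, _, heq⟩
    have h := Option.some.inj heq
    have hi : i = u := (Prod.ext_iff.1 h).2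
    exact huT (hi ▸ hiT)
  have hS1card : S1.ncard = (t + 1) * T.ncard := by
    have hS1img : S1 = (fun q : Fin (t+1) × V => (some q : Option (Fin (t+1) × V))) ''
        ((Set.univ : Set (Fin (t+1))) ×ˢ T) := by
      ext p
      constructor
      · rintro ⟨i, hiT, s, rfl⟩; exact ⟨(s, i), ⟨trivial, hiT⟩, rfl⟩
      · rintro ⟨⟨s, i⟩, ⟨-, hiT⟩, rfl⟩; exact ⟨i, hiT, s, rfl⟩
    rw [hS1img, Set.ncard_image_of_injective _ (Option.some_injective _),
      ← Nat.card_coe_set_eq, Nat.card_congr (Equiv.Set.prod _ _), Nat.card_prod,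
      Nat.card_congr (Equiv.Set.univ _), Nat.card_eq_fintype_card, Fintype.card_fin,
      Nat.card_coe_set_eq]
  have hinj2 : Function.Injective
      (fun s : Fin (t+1) => (some (s, u) : Option (Fin (t+1) × V))) := by
    intro a b h
    exact (Prod.ext_iff.1 (Option.some.inj h)).1
  have hLcard : ({s : Fin (t+1) | 1 ≤ s.val ∧ s.val ≤ t - 1}).ncard = t - 1 := by
    have hfinL : ({s : Fin (t+1) | 1 ≤ s.val ∧ s.val ≤ t - 1}).Finite := Set.toFinite _
    rw [Set.ncard_eq_toFinset_card _ hfinL]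
    have himg : hfinL.toFinset.image Fin.val = Finset.Icc 1 (t - 1) := by
      ext n
      simp only [Finset.mem_image, Set.Finite.mem_toFinset, Set.mem_setOf_eq, Finset.mem_Icc]
      constructor
      · rintro ⟨s, ⟨h1, h2⟩, rfl⟩; exact ⟨h1, h2⟩
      · rintro ⟨h1, h2⟩; exact ⟨⟨n, by omega⟩, ⟨h1, h2⟩, rfl⟩
    rw [← Finset.card_image_of_injective _ Fin.val_injective, himg, Nat.card_Icc]
    omega
  have hS2card : S2.ncard = t - 1 := by
    have hS2img : S2 = (fun s : Fin (t+1) => (some (s, u) : Option (Fin (t+1) × V))) ''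
        {s : Fin (t+1) | 1 ≤ s.val ∧ s.val ≤ t - 1} := by
      ext p
      constructor
      · rintro ⟨s, h1, h2, rfl⟩; exact ⟨s, ⟨h1, h2⟩, rfl⟩
      · rintro ⟨s, ⟨h1, h2⟩, rfl⟩; exact ⟨s, h1, h2, rfl⟩
    rw [hS2img, Set.ncard_image_of_injective _ hinj2, hLcard]
  have hScard : (S1 ∪ S2).ncard = (t + 1) * T.ncard + (t - 1) := by
    rw [Set.ncard_union_eq hdisj (Set.toFinite _) (Set.toFinite _), hS1card, hS2card]
  ----------------------------------------------------------------
  -- PART 3 : minimality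
  ----------------------------------------------------------------
  have hmin : ∀ T' : Set (Option (Fin (t+1) × V)),
      IsTwinCover (Mycielskian G t) T' → (S1 ∪ S2).ncard ≤ T'.ncard := by
    intro T' hT'
    rw [hScard]
    set I : Set V := {i | ∀ x, ¬ G.Adj i x} with hIdef
    have huI : u ∈ I := hu
    set Ts : Fin (t+1) → Set V := fun s => {i | some (s, i) ∈ T'} with hTsdef
    have hTs_cover : ∀ s, IsTwinCover G (Ts s) := by
      intro s x y hxy hN2
      have h := myc_twin_lift hN2 s
      have hne : (some (s, x) : Option (Fin (t+1) × V)) ≠ some (s, y) := by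
        intro hh
        exact hxy (Prod.ext_iff.1 (Option.some.inj hh)).2
      exact hT' (some (s, x)) (some (s, y)) hne h
    have hTs_lb : ∀ s, T.ncard ≤ (Ts s).ncard := fun s => hT.2 _ (hTs_cover s)
    have hW : ∀ s, I ⊆ Ts s → T.ncard + 1 ≤ (Ts s).ncard := by
      intro s hIW
      have huW : u ∈ Ts s := hIW huI
      have hcov : IsTwinCover G (Ts s \ {u}) := by
        intro x y hxy hN2
        by_cases hxu : x = u
        · subst hxu
          have hyI : y ∈ I := by
            intro z hz
            have hz' : z ∈ G.neighborSet y := hz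
            rw [← hN2] at hz'
            exact hu z hz'
          exact Or.inr ⟨hIW hyI, fun h => hxy (Set.mem_singleton_iff.1 h).symm⟩
        · by_cases hyu : y = u
          · subst hyu
            have hxI : x ∈ I := by
              intro z hz
              have hz' : z ∈ G.neighborSet x := hz
              rw [hN2] at hz'
              exact hu z hz'
            exact Or.inl ⟨hIW hxI, fun h => hxu (Set.mem_singleton_iff.1 h)⟩
          · rcases hTs_cover s x y hxy hN2 with h | h
            · exact Or.inl ⟨h, fun hh => hxu (Set.mem_singleton_iff.1 hh)⟩
            · exact Or.inr ⟨h, fun hh => hyu (Set.mem_singleton_iff.1 hh)⟩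
      have h1 : T.ncard ≤ (Ts s \ {u}).ncard := hT.2 _ hcov
      have h2 : (Ts s \ {u}).ncard + 1 = (Ts s).ncard :=
        Set.ncard_diff_singleton_add_one huW
      omega
    obtain ⟨s₀, hs₀⟩ : ∃ s₀ : Fin (t+1), ∀ s : Fin (t+1), s.val < t → s ≠ s₀ → I ⊆ Ts s := by
      by_cases hbad : ∃ s : Fin (t+1), s.val < t ∧ ¬ I ⊆ Ts s
      · obtain ⟨s₁, hs₁t, hs₁⟩ := hbad
        rw [Set.not_subset] at hs₁
        obtain ⟨i₁, hi₁I, hi₁⟩ := hs₁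
        refine ⟨s₁, fun s hst hne i hiI => ?_⟩
        by_contra hnot
        have htwin : (Mycielskian G t).neighborSet (some (s, i)) =
            (Mycielskian G t).neighborSet (some (s₁, i₁)) := by
          rw [myc_iso_empty hiI hst, myc_iso_empty hi₁I hs₁t]
        have hne2 : (some (s, i) : Option (Fin (t+1) × V)) ≠ some (s₁, i₁) := by
          intro h
          exact hne (Prod.ext_iff.1 (Option.some.inj h)).1
        rcases hT' _ _ hne2 htwin with h | h
        · exact hnot h
        · exact hi₁ h
      · push_neg at hbad
        exact ⟨Fin.last t, fun s hst _ => hbad s hst⟩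
    -- counting
    have hT'fin : T'.Finite := Set.toFinite _
    have hkey : ∀ s : Fin (t+1), (Ts s).ncard ≤
        (hT'fin.toFinset.filter fun p => Option.map Prod.fst p = some s).card := by
      intro s
      rw [Set.ncard_eq_toFinset_card _ (Set.toFinite (Ts s))]
      apply Finset.card_le_card_of_injOn (fun i => some (s, i))
      · intro i hi
        rw [Finset.mem_coe, Set.Finite.mem_toFinset] at hi
        simp only [Finset.mem_coe, Finset.mem_filter, Set.Finite.mem_toFinset]
        exact ⟨hi, rfl⟩
      · intro a _ b _ h
        exact (Prod.ext_iff.1 (Option.some.inj h)).2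
    have hfib : ∑ s : Fin (t+1),
        (hT'fin.toFinset.filter fun p => Option.map Prod.fst p = some s).card ≤
        hT'fin.toFinset.card := by
      have hcf := Finset.card_eq_sum_card_fiberwise
        (f := fun p : Option (Fin (t+1) × V) => Option.map Prod.fst p)
        (s := hT'fin.toFinset) (t := Finset.univ) (fun x _ => Finset.mem_univ _)
      calc ∑ s : Fin (t+1),
            (hT'fin.toFinset.filter fun p => Option.map Prod.fst p = some s).card
          ≤ (hT'fin.toFinset.filter fun p => Option.map Prod.fst p = none).card +
            ∑ s : Fin (t+1),
            (hT'fin.toFinset.filter fun p => Option.map Prod.fst p = some s).card :=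
            Nat.le_add_left _ _
        _ = ∑ b : Option (Fin (t+1)),
            (hT'fin.toFinset.filter fun p => Option.map Prod.fst p = b).card := by
            rw [univ_option, Finset.sum_insertNone]
        _ = hT'fin.toFinset.card := hcf.symm
    set F : Finset (Fin (t+1)) := Finset.univ.filter (fun s => s.val < t ∧ s ≠ s₀) with hFdef
    have hFcard : t - 1 ≤ F.card := by
      have h1 : (Finset.univ.filter (fun s : Fin (t+1) => s.val < t)) =
          Finset.univ.erase (Fin.last t) := by
        ext s
        simp only [Finset.mem_filter, Finset.mem_univ, true_and, Finset.mem_erase, and_true]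
        constructor
        · intro h hh
          rw [hh] at h
          simp [Fin.last] at h
        · intro h
          have : s.val ≠ t := fun hh => h (Fin.ext hh)
          have := s.isLt
          omega
      have h2 : F = (Finset.univ.filter (fun s : Fin (t+1) => s.val < t)).erase s₀ := by
        ext s
        simp only [hFdef, Finset.mem_filter, Finset.mem_univ, true_and, Finset.mem_erase]
        tauto
      have h3 := Finset.pred_card_le_card_erase
        (s := Finset.univ.filter (fun s : Fin (t+1) => s.val < t)) (a := s₀)
      have h4 : (Finset.univ.filter (fun s : Fin (t+1) => s.val < t)).card = t := by
        rw [h1, Finset.card_erase_of_mem (Finset.mem_univ _), Finset.card_univ,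
          Fintype.card_fin]
        omega
      rw [h2]
      omega
    have hpt : ∀ s : Fin (t+1), T.ncard + (if s ∈ F then 1 else 0) ≤ (Ts s).ncard := by
      intro s
      by_cases hsF : s ∈ F
      · rw [if_pos hsF]
        rw [hFdef, Finset.mem_filter] at hsF
        exact hW s (hs₀ s hsF.2.1 hsF.2.2)
      · rw [if_neg hsF]
        simpa using hTs_lb s
    have hsum_lb : (t + 1) * T.ncard + (t - 1) ≤ ∑ s : Fin (t+1), (Ts s).ncard := by
      have hsum1 : ∑ s : Fin (t+1), (T.ncard + if s ∈ F then 1 else 0) =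
          (t + 1) * T.ncard + F.card := by
        rw [Finset.sum_add_distrib, Finset.sum_const, Finset.card_univ, Fintype.card_fin,
          smul_eq_mul]
        congr 1
        rw [Finset.sum_ite_mem, Finset.univ_inter, Finset.sum_const, smul_eq_mul, mul_one]
      have hsum2 : ∑ s : Fin (t+1), (T.ncard + if s ∈ F then 1 else 0) ≤
          ∑ s : Fin (t+1), (Ts s).ncard :=
        Finset.sum_le_sum (fun s _ => hpt s)
      omega
    calc (t + 1) * T.ncard + (t - 1)
        ≤ ∑ s : Fin (t+1), (Ts s).ncard := hsum_lb
      _ ≤ ∑ s : Fin (t+1),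
          (hT'fin.toFinset.filter fun p => Option.map Prod.fst p = some s).card :=
          Finset.sum_le_sum (fun s _ => hkey s)
      _ ≤ hT'fin.toFinset.card := hfib
      _ = T'.ncard := (Set.ncard_eq_toFinset_card _ hT'fin).symm
  refine ⟨⟨hcover, hmin⟩, ?_⟩
  rw [hScard]
  have hm : (t + 1) * T.ncard = (t + 1) * T.ncard := rfl
  set m := (t + 1) * T.ncard with hmdef
  omega
end
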